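/- Let D be the K-algebra generated by x, ∂, ∂₁, ∂₋₁ acting on K[x] (where ∂_a(x^n) = [n]_{q^a} x^{n-1} and q transcendental over ℚ). Then for all j ≥ 1, [j]_q ∂^j ≡ j q^j ∂₁ ∂^{j-1} (mod Dx), where Dx is the left ideal generated by x. -/
import Mathlib


open Polynomial

/-- In the algebra `D` generated by `x, ∂, ∂₁, ∂₋₁` acting on `K[x]`, for all `j ≥ 1`
one has `[j]_q ∂ʲ ≡ j qʲ ∂₁ ∂^{j-1} (mod Dx)`, i.e. the difference lies in the left
ideal `Dx = {u x : u ∈ D}`. -/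
theorem stmt15 {K : Type*} [Field K] [CharZero K] (q : K) (hq : Transcendental ℚ q)
    (Xop D D1 Dm1 : Module.End K (Polynomial K))
    (hX : ∀ n : ℕ, Xop (X ^ n) = X ^ (n + 1))
    (hD : ∀ n : ℕ, D (X ^ n) = (n : K) • X ^ (n - 1))
    (hD1 : ∀ n : ℕ, D1 (X ^ n) = (∑ i ∈ Finset.range n, q ^ i) • X ^ (n - 1))
    (hDm1 : ∀ n : ℕ, Dm1 (X ^ n) = (∑ i ∈ Finset.range n, (q⁻¹) ^ i) • X ^ (n - 1))
    (j : ℕ) (hj : 1 ≤ j) :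
    ∃ u ∈ Algebra.adjoin K {Xop, D, D1, Dm1},
      (∑ i ∈ Finset.range j, q ^ i) • D ^ j - ((j : K) * q ^ j) • (D1 * D ^ (j - 1))
        = u * Xop := by
  have hq1 : q - 1 ≠ 0 := sub_ne_zero.mpr (fun h => hq (h ▸ isAlgebraic_one))
  have hDpow : ∀ (k n : ℕ), (D ^ k) (X ^ n : K[X]) = (n.descFactorial k : K) • X ^ (n - k) := by
    intro k
    induction k with
    | zero => intro n; simp
    | succ k ih =>
      intro n
      rw [pow_succ, Module.End.mul_apply, hD n, map_smul, ih (n-1)]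
      cases n with
      | zero => simp
      | succ m =>
        rw [Nat.succ_sub_one, Nat.succ_descFactorial_succ, smul_smul, Nat.succ_sub_succ]
        push_cast
        ring_nf
  refine ⟨D ^ j * D1 - q ^ j • (D1 * D ^ j), ?_, ?_⟩
  · have hD' : D ∈ Algebra.adjoin K {Xop, D, D1, Dm1} :=
      Algebra.subset_adjoin (by simp)
    have hD1' : D1 ∈ Algebra.adjoin K {Xop, D, D1, Dm1} :=
      Algebra.subset_adjoin (by simp)
    exact sub_mem (mul_mem (pow_mem hD' j) hD1')
      (Subalgebra.smul_mem _ (mul_mem hD1' (pow_mem hD' j)) _)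
  · have key : ∀ n : ℕ,
        ((∑ i ∈ Finset.range j, q ^ i) • D ^ j
            - ((j : K) * q ^ j) • (D1 * D ^ (j - 1))) (X ^ n : K[X])
        = ((D ^ j * D1 - q ^ j • (D1 * D ^ j)) * Xop) (X ^ n) := by
      intro n
      have e1 : n - (j - 1) - 1 = n - j := by omega
      have e2 : n + 1 - 1 = n := by omega
      have e3 : n + 1 - j - 1 = n - j := by omega
      have e4 : n - (j - 1) = n + 1 - j := by omega
      simp only [LinearMap.sub_apply, LinearMap.smul_apply, Module.End.mul_apply, hX, hD1,
        hDpow, map_smul, smul_smul, e1, e2, e3, e4]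
      rw [← sub_smul, ← sub_smul]
      congr 1
      -- scalar identity
      rcases le_or_gt j n with h | h
      · have m1 : n + 1 - j ≥ 1 := by omega
        have hdf1n : n.descFactorial j = (n+1-j) * n.descFactorial (j-1) := by
          have h' := Nat.descFactorial_succ n (j-1)
          rw [show j - 1 + 1 = j by omega] at h'
          rw [h', show n - (j-1) = n + 1 - j from by omega]
        have hdf2n : (n+1).descFactorial j = (n+1) * n.descFactorial (j-1) := by
          have h' := Nat.succ_descFactorial_succ n (j-1)
          rwa [show j - 1 + 1 = j by omega] at h'
        have hdf1 : (n.descFactorial j : K) = ((n : K) + 1 - (j : K)) * (n.descFactorial (j-1) : K) := by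
          rw [hdf1n]; push_cast [Nat.cast_sub (show j ≤ n + 1 by omega)]; ring
        have hdf2 : ((n+1).descFactorial j : K) = ((n : K) + 1) * (n.descFactorial (j-1) : K) := by
          rw [hdf2n]; push_cast; ring
        have hpow : q ^ (n+1) = q ^ j * q ^ (n+1-j) := by
          rw [← pow_add]; congr 1; omega
        have Hj : (∑ i ∈ Finset.range j, q ^ i) * (q - 1) = q ^ j - 1 := geom_sum_mul q j
        have Hm : (∑ i ∈ Finset.range (n+1-j), q ^ i) * (q - 1) = q ^ (n+1-j) - 1 :=
          geom_sum_mul q (n+1-j)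
        have Hn : (∑ i ∈ Finset.range (n+1), q ^ i) * (q - 1) = q ^ (n+1) - 1 :=
          geom_sum_mul q (n+1)
        rw [hdf1, hdf2]
        rw [hpow] at Hn
        set Qj := (∑ i ∈ Finset.range j, q ^ i)
        set Qm := (∑ i ∈ Finset.range (n+1-j), q ^ i)
        set Qn := (∑ i ∈ Finset.range (n+1), q ^ i)
        set d := (n.descFactorial (j-1) : K)
        apply mul_right_cancel₀ hq1
        linear_combination (((n:K)+1-(j:K))*d) * Hj
          + (q^j*((n:K)+1)*d - (j:K)*q^j*d) * Hm - (((n:K)+1-(j:K))*d) * Hn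
      · have z1 : (n.descFactorial j : K) = 0 := by
          rw_mod_cast [Nat.descFactorial_eq_zero_iff_lt.mpr h]
        have z2 : n + 1 - j = 0 := by omega
        simp [z1, z2]
    apply LinearMap.ext
    intro p
    induction p using Polynomial.induction_on' with
    | add p r hp hr => simp only [map_add, hp, hr]
    | monomial n a =>
      rw [← C_mul_X_pow_eq_monomial, ← smul_eq_C_mul, map_smul, map_smul, key n]
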